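/- Single-edge case of cost non-increase: In ℝ^k with the ℓ₁ metric, let x = (0, z) and y = (1/2, z) with z ∈ ((1/2)ℤ)^{k−1}, and consider the unit demand b = δ_y − δ_x (cost 1/2 to route). Apply the reduction distributing each point's demand uniformly over all integer roundings of its non-integer coordinates. Then the reduced demand b₀ can be routed in ℓ₁ at cost at most 1/2, i.e., ‖b₀‖_opt ≤ ‖b‖_opt = 1/2. -/

import Mathlib

open Classical in
/-- Single-edge case of cost non-increase: for the unit demand `δ_y − δ_x` with
`x = (0,z)`, `y = (1/2,z)` and `z` half-integer, the reduced demand obtained by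
uniformly rounding half-integer coordinates routes at cost at most `1/2`, while the
original min-cost is exactly `1/2`. -/
theorem stmt14 (k : ℕ) (z : Fin k → ℝ)
    (hz : ∀ i, ∃ n : ℤ, z i = (n : ℝ) / 2)
    (x y : Fin (k + 1) → ℝ)
    (hx : x = Fin.cons (0 : ℝ) z) (hy : y = Fin.cons (1 / 2 : ℝ) z)
    (ρ : (Fin (k + 1) → Bool) → (Fin (k + 1) → ℝ) → (Fin (k + 1) → ℝ))
    (hρint : ∀ s w (i : Fin (k + 1)), (∃ n : ℤ, w i = (n : ℝ)) → ρ s w i = w i)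
    (hρhalf : ∀ s w (i : Fin (k + 1)), ¬(∃ n : ℤ, w i = (n : ℝ)) →
      ρ s w i = if s i then w i + 1 / 2 else w i - 1 / 2)
    (Rb : (Fin (k + 1) → ℝ) → ℝ)
    (hRb : ∀ u, Rb u = (1 / 2 ^ (k + 1)) * ∑ s : Fin (k + 1) → Bool,
      ((if ρ s y = u then (1 : ℝ) else 0) - (if ρ s x = u then (1 : ℝ) else 0)))
    (S : Finset (Fin (k + 1) → ℝ))
    (hS : S = Finset.image (fun p : (Fin (k + 1) → Bool) × (Fin (k + 1) → ℝ) => ρ p.1 p.2)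
      (Finset.univ ×ˢ ({x, y} : Finset (Fin (k + 1) → ℝ)))) :
    sSup {r | ∃ φ : (Fin (k + 1) → ℝ) → ℝ,
        (∀ u v : Fin (k + 1) → ℝ, |φ u - φ v| ≤ ∑ i, |u i - v i|) ∧
        r = ∑ u ∈ S, φ u * Rb u} ≤ 1 / 2 ∧
    sSup {r | ∃ φ : (Fin (k + 1) → ℝ) → ℝ,
        (∀ u v : Fin (k + 1) → ℝ, |φ u - φ v| ≤ ∑ i, |u i - v i|) ∧
        r = φ y - φ x} = 1 / 2 := by
  -- basic coordinate facts
  have hx0 : x 0 = 0 := by rw [hx]; simp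
  have hy0 : y 0 = 1 / 2 := by rw [hy]; simp
  have hxs : ∀ i : Fin k, x i.succ = z i := by intro i; rw [hx]; simp
  have hys : ∀ i : Fin k, y i.succ = z i := by intro i; rw [hy]; simp
  have hhalf : ¬ ∃ n : ℤ, (1 / 2 : ℝ) = (n : ℝ) := by
    rintro ⟨n, hn⟩
    have h2 : (1 : ℝ) = 2 * n := by linarith
    have h3 : (1 : ℤ) = 2 * n := by exact_mod_cast h2
    omega
  have hρx0 : ∀ s, ρ s x 0 = 0 := by
    intro s
    rw [hρint s x 0 ⟨0, by rw [hx0]; norm_num⟩, hx0]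
  have hρy0 : ∀ s, ρ s y 0 = if s 0 then 1 else 0 := by
    intro s
    rw [hρhalf s y 0 (by rw [hy0]; exact hhalf), hy0]
    by_cases h : s 0 <;> simp [h] <;> norm_num
  have hcoord : ∀ s (i : Fin k), ρ s x i.succ = ρ s y i.succ := by
    intro s i
    by_cases h : ∃ n : ℤ, z i = (n : ℝ)
    · rw [hρint s x _ (by rw [hxs]; exact h), hρint s y _ (by rw [hys]; exact h),
        hxs, hys]
    · rw [hρhalf s x _ (by rw [hxs]; exact h), hρhalf s y _ (by rw [hys]; exact h),
        hxs, hys]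
  have hfalse : ∀ s, s 0 = false → ρ s y = ρ s x := by
    intro s hs
    funext i
    refine Fin.cases ?_ ?_ i
    · rw [hρx0, hρy0, hs]; simp
    · intro j; exact (hcoord s j).symm
  -- the ℓ¹ distance between x and y
  have hxy : ∑ i, |y i - x i| = 1 / 2 := by
    rw [Fin.sum_univ_succ, hx0, hy0]
    have : ∀ i : Fin k, |y i.succ - x i.succ| = 0 := by
      intro i; rw [hxs, hys]; simp
    rw [Finset.sum_congr rfl fun i _ => this i]
    norm_num
  -- key Lipschitz bound for each sign vector
  have key : ∀ (φ : (Fin (k + 1) → ℝ) → ℝ),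
      (∀ u v : Fin (k + 1) → ℝ, |φ u - φ v| ≤ ∑ i, |u i - v i|) →
      ∀ s, φ (ρ s y) - φ (ρ s x) ≤ if s 0 then (1 : ℝ) else 0 := by
    intro φ hφ s
    by_cases hs : s 0
    · simp only [hs, if_true]
      have h1 := hφ (ρ s y) (ρ s x)
      have h2 : ∑ i, |ρ s y i - ρ s x i| = 1 := by
        rw [Fin.sum_univ_succ, hρx0, hρy0, hs]
        have : ∀ i : Fin k, |ρ s y i.succ - ρ s x i.succ| = 0 := by
          intro i; rw [hcoord]; simp
        rw [Finset.sum_congr rfl fun i _ => this i]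
        simp
      calc φ (ρ s y) - φ (ρ s x) ≤ |φ (ρ s y) - φ (ρ s x)| := le_abs_self _
        _ ≤ 1 := by rw [← h2]; exact h1
    · simp only [hs, if_false]
      rw [hfalse s (by simpa using hs)]
      simp
  -- counting
  have hcount : ∑ s : Fin (k + 1) → Bool, (if s 0 then (1 : ℝ) else 0) = 2 ^ k := by
    calc ∑ s : Fin (k + 1) → Bool, (if s 0 then (1 : ℝ) else 0)
        = ∑ p : Bool × (Fin k → Bool), (if p.1 then (1 : ℝ) else 0) := by
          refine Fintype.sum_equiv (Fin.consEquiv (fun _ : Fin (k + 1) => Bool)).symm _ _ fun s => ?_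
          simp [Fin.consEquiv]
          congr
      _ = 2 ^ k := by
          rw [Fintype.sum_prod_type]
          simp [Finset.sum_const]
  constructor
  · -- first goal
    have hne : (0 : ℝ) ∈ {r | ∃ φ : (Fin (k + 1) → ℝ) → ℝ,
        (∀ u v : Fin (k + 1) → ℝ, |φ u - φ v| ≤ ∑ i, |u i - v i|) ∧
        r = ∑ u ∈ S, φ u * Rb u} := by
      refine ⟨fun _ => 0, fun u v => by simpa using Finset.sum_nonneg fun i _ => abs_nonneg _, ?_⟩
      simp
    refine csSup_le ⟨0, hne⟩ ?_
    rintro r ⟨φ, hφ, rfl⟩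
    have hmemy : ∀ s, ρ s y ∈ S := by
      intro s; rw [hS]
      exact Finset.mem_image.2 ⟨(s, y), by simp, rfl⟩
    have hmemx : ∀ s, ρ s x ∈ S := by
      intro s; rw [hS]
      exact Finset.mem_image.2 ⟨(s, x), by simp, rfl⟩
    have step1 : ∑ u ∈ S, φ u * Rb u
        = (1 / 2 ^ (k + 1)) * ∑ s : Fin (k + 1) → Bool, (φ (ρ s y) - φ (ρ s x)) := by
      have : ∀ u ∈ S, φ u * Rb u = (1 / 2 ^ (k + 1)) *
          ∑ s : Fin (k + 1) → Bool,
            ((if ρ s y = u then φ u else 0) - (if ρ s x = u then φ u else 0)) := by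
        intro u _
        rw [hRb u, ← mul_assoc, mul_comm (φ u) ((1:ℝ) / 2 ^ (k + 1)), mul_assoc,
          Finset.mul_sum]
        congr 1
        refine Finset.sum_congr rfl fun s _ => ?_
        by_cases h1 : ρ s y = u <;> by_cases h2 : ρ s x = u <;> simp [h1, h2]
      rw [Finset.sum_congr rfl this, ← Finset.mul_sum, Finset.sum_comm]
      congr 1
      refine Finset.sum_congr rfl fun s _ => ?_
      rw [Finset.sum_sub_distrib, Finset.sum_ite_eq, Finset.sum_ite_eq,
        if_pos (hmemy s), if_pos (hmemx s)]
    rw [step1]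
    have hsum : ∑ s : Fin (k + 1) → Bool, (φ (ρ s y) - φ (ρ s x)) ≤ 2 ^ k := by
      calc ∑ s : Fin (k + 1) → Bool, (φ (ρ s y) - φ (ρ s x))
          ≤ ∑ s : Fin (k + 1) → Bool, (if s 0 then (1 : ℝ) else 0) :=
            Finset.sum_le_sum fun s _ => key φ hφ s
        _ = 2 ^ k := hcount
    have hpos : (0 : ℝ) < 1 / 2 ^ (k + 1) := by positivity
    calc (1 / 2 ^ (k + 1)) * ∑ s : Fin (k + 1) → Bool, (φ (ρ s y) - φ (ρ s x))
        ≤ (1 / 2 ^ (k + 1) : ℝ) * 2 ^ k := by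
          exact mul_le_mul_of_nonneg_left hsum (le_of_lt hpos)
      _ = 1 / 2 := by
          rw [pow_succ]
          field_simp
    -- second goal
  · have hub : ∀ r ∈ {r | ∃ φ : (Fin (k + 1) → ℝ) → ℝ,
        (∀ u v : Fin (k + 1) → ℝ, |φ u - φ v| ≤ ∑ i, |u i - v i|) ∧
        r = φ y - φ x}, r ≤ 1 / 2 := by
      rintro r ⟨φ, hφ, rfl⟩
      calc φ y - φ x ≤ |φ y - φ x| := le_abs_self _
        _ ≤ ∑ i, |y i - x i| := hφ y x
        _ = 1 / 2 := hxy
    have hmem : (1 / 2 : ℝ) ∈ {r | ∃ φ : (Fin (k + 1) → ℝ) → ℝ,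
        (∀ u v : Fin (k + 1) → ℝ, |φ u - φ v| ≤ ∑ i, |u i - v i|) ∧
        r = φ y - φ x} := by
      refine ⟨fun u => u 0, fun u v => ?_, by show (1/2:ℝ) = y 0 - x 0; rw [hx0, hy0]; ring⟩
      exact Finset.single_le_sum (f := fun i => |u i - v i|)
        (fun i _ => abs_nonneg _) (Finset.mem_univ 0)
    exact le_antisymm (csSup_le ⟨1 / 2, hmem⟩ hub) (le_csSup ⟨1 / 2, hub⟩ hmem)
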